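/- For every integer n ≥ 2: inspc(K_n) = ⌈n/2⌉, inspc(S*_n) = ⌈n/2⌉, inspp(S̃_n) = n + 1, inpc(K_{1,n}) = ⌈n/2⌉, and insc(P_n) = ⌈n/3⌉. -/

import Mathlib

open SimpleGraph

/-- `G` contains an induced subgraph isomorphic to `H`. -/
def HasInducedCopy {V W : Type*} (G : SimpleGraph V) (H : SimpleGraph W) : Prop :=
  ∃ f : W ↪ V, ∀ a b : W, G.Adj (f a) (f b) ↔ H.Adj a b

/-- The star `K_{1,m}` (one center plus `m` leaves). -/
def starGraphK1 (m : ℕ) : SimpleGraph (Unit ⊕ Fin m) := completeBipartiteGraph Unit (Fin m)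

/-- `S` induces in `G` a subgraph isomorphic to a path `P_m` on `m ≥ 1` vertices. -/
def IsInducedPathSet {V : Type*} (G : SimpleGraph V) (S : Set V) : Prop :=
  ∃ m : ℕ, 1 ≤ m ∧ Nonempty ((G.induce S) ≃g pathGraph m)

/-- `S` induces in `G` a subgraph isomorphic to a star `K_{1,m}` with `m ≥ 1`. -/
def IsInducedStarSet {V : Type*} (G : SimpleGraph V) (S : Set V) : Prop :=
  ∃ m : ℕ, 1 ≤ m ∧ Nonempty ((G.induce S) ≃g starGraphK1 m)

/-- `S` consists of a single vertex (i.e. induces `K_1`). -/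
def IsSingletonSet {V : Type*} (S : Set V) : Prop := ∃ v, S = {v}

/-- `S` is the vertex set of an isometric (shortest) path of `G`. -/
def IsIsometricPathSet {V : Type*} (G : SimpleGraph V) (S : Set V) : Prop :=
  ∃ (u v : V) (p : G.Walk u v), p.IsPath ∧ p.length = G.dist u v ∧
    S = {x | x ∈ p.support}

/-- `P` is a family of sets, all satisfying `pred`, whose union is all of `V`. -/
def IsCoverBy {V : Type*} (P : Finset (Set V)) (pred : Set V → Prop) : Prop :=
  (∀ S ∈ P, pred S) ∧ ∀ v : V, ∃ S ∈ P, v ∈ S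

/-- `P` is a cover by sets satisfying `pred`, whose members are pairwise disjoint. -/
def IsPartitionBy {V : Type*} (P : Finset (Set V)) (pred : Set V → Prop) : Prop :=
  IsCoverBy P pred ∧ ∀ S ∈ P, ∀ T ∈ P, S ≠ T → ∀ v, v ∈ S → v ∉ T

/-- Minimum cardinality of a cover by sets satisfying `pred`. -/
noncomputable def coverNumber {V : Type*} (pred : Set V → Prop) : ℕ :=
  sInf {k | ∃ P : Finset (Set V), P.card = k ∧ IsCoverBy P pred}

/-- Minimum cardinality of a partition into sets satisfying `pred`. -/
noncomputable def partitionNumber {V : Type*} (pred : Set V → Prop) : ℕ :=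
  sInf {k | ∃ P : Finset (Set V), P.card = k ∧ IsPartitionBy P pred}

/-- The induced SP-cover number. -/
noncomputable def inspc {V : Type*} (G : SimpleGraph V) : ℕ :=
  coverNumber (fun S => IsInducedStarSet G S ∨ IsInducedPathSet G S)

/-- The induced SP-partition number. -/
noncomputable def inspp {V : Type*} (G : SimpleGraph V) : ℕ :=
  partitionNumber (fun S => IsInducedStarSet G S ∨ IsInducedPathSet G S)

/-- The induced star cover number. -/
noncomputable def insc {V : Type*} (G : SimpleGraph V) : ℕ :=
  coverNumber (fun S => IsInducedStarSet G S ∨ IsSingletonSet S)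

/-- The induced star partition number. -/
noncomputable def insp {V : Type*} (G : SimpleGraph V) : ℕ :=
  partitionNumber (fun S => IsInducedStarSet G S ∨ IsSingletonSet S)

/-- The induced path cover number. -/
noncomputable def inpc {V : Type*} (G : SimpleGraph V) : ℕ :=
  coverNumber (fun S => IsInducedPathSet G S)

/-- The induced path partition number. -/
noncomputable def inpp {V : Type*} (G : SimpleGraph V) : ℕ :=
  partitionNumber (fun S => IsInducedPathSet G S)

/-- The isometric path cover number. -/
noncomputable def ispc {V : Type*} (G : SimpleGraph V) : ℕ :=
  coverNumber (fun S => IsIsometricPathSet G S)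

/-- The isometric path partition number. -/
noncomputable def ispp {V : Type*} (G : SimpleGraph V) : ℕ :=
  partitionNumber (fun S => IsIsometricPathSet G S)

/-- `S*_n` : center `x = inl ()`, middle vertices `y i = inr (inl i)`,
leaves `z i = inr (inr i)`; edges `x yᵢ` and `yᵢ zᵢ`. -/
def SStar (n : ℕ) : SimpleGraph (Unit ⊕ Fin n ⊕ Fin n) :=
  SimpleGraph.fromRel (fun a b =>
    (∃ i : Fin n, a = Sum.inl () ∧ b = Sum.inr (Sum.inl i)) ∨
    (∃ i : Fin n, a = Sum.inr (Sum.inl i) ∧ b = Sum.inr (Sum.inr i)))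

/-- `S̃_n` : `S*_n` together with the edges `x zᵢ`. -/
def STilde (n : ℕ) : SimpleGraph (Unit ⊕ Fin n ⊕ Fin n) :=
  SimpleGraph.fromRel (fun a b =>
    (∃ i : Fin n, a = Sum.inl () ∧ b = Sum.inr (Sum.inl i)) ∨
    (∃ i : Fin n, a = Sum.inr (Sum.inl i) ∧ b = Sum.inr (Sum.inr i)) ∨
    (∃ i : Fin n, a = Sum.inl () ∧ b = Sum.inr (Sum.inr i)))

/-- `F⁽¹⁾_n` : vertices `x₁ = inl 0`, `x₂ = inl 1`, `yᵢ = inr (inl i)`, `zᵢ = inr (inr i)`;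
edges `x₁x₂`, `x₁y₁`, `x₁z₁`, and two paths `y₁⋯yₙ`, `z₁⋯zₙ`. -/
def F1 (n : ℕ) : SimpleGraph (Fin 2 ⊕ Fin n ⊕ Fin n) :=
  SimpleGraph.fromRel (fun a b =>
    (a = Sum.inl 0 ∧ b = Sum.inl 1) ∨
    (∃ j : Fin n, (j : ℕ) = 0 ∧ a = Sum.inl 0 ∧ b = Sum.inr (Sum.inl j)) ∨
    (∃ j : Fin n, (j : ℕ) = 0 ∧ a = Sum.inl 0 ∧ b = Sum.inr (Sum.inr j)) ∨
    (∃ i j : Fin n, (i : ℕ) + 1 = (j : ℕ) ∧ a = Sum.inr (Sum.inl i) ∧ b = Sum.inr (Sum.inl j)) ∨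
    (∃ i j : Fin n, (i : ℕ) + 1 = (j : ℕ) ∧ a = Sum.inr (Sum.inr i) ∧ b = Sum.inr (Sum.inr j)))

/-- `F⁽²⁾_n` : vertex `x₁ = inl ()`, `yᵢ = inr (inl i)`, `zᵢ = inr (inr i)`;
edges `x₁y₁`, `x₁z₁`, `y₁z₁`, and two paths `y₁⋯yₙ`, `z₁⋯zₙ`. -/
def F2 (n : ℕ) : SimpleGraph (Unit ⊕ Fin n ⊕ Fin n) :=
  SimpleGraph.fromRel (fun a b =>
    (∃ j : Fin n, (j : ℕ) = 0 ∧ a = Sum.inl () ∧ b = Sum.inr (Sum.inl j)) ∨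
    (∃ j : Fin n, (j : ℕ) = 0 ∧ a = Sum.inl () ∧ b = Sum.inr (Sum.inr j)) ∨
    (∃ i j : Fin n, (i : ℕ) = 0 ∧ (j : ℕ) = 0 ∧ a = Sum.inr (Sum.inl i) ∧ b = Sum.inr (Sum.inr j)) ∨
    (∃ i j : Fin n, (i : ℕ) + 1 = (j : ℕ) ∧ a = Sum.inr (Sum.inl i) ∧ b = Sum.inr (Sum.inl j)) ∨
    (∃ i j : Fin n, (i : ℕ) + 1 = (j : ℕ) ∧ a = Sum.inr (Sum.inr i) ∧ b = Sum.inr (Sum.inr j)))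

/-- `F⁽³⁾_n` : vertices `xᵢ = inl i`, `yᵢ = inr (inl i)`, `zᵢ = inr (inr i)`;
edges `xᵢy₁`, `xᵢz₁` for all `i`, and two paths `y₁⋯yₙ`, `z₁⋯zₙ`. -/
def F3 (n : ℕ) : SimpleGraph (Fin n ⊕ Fin n ⊕ Fin n) :=
  SimpleGraph.fromRel (fun a b =>
    (∃ (i j : Fin n), (j : ℕ) = 0 ∧ a = Sum.inl i ∧ b = Sum.inr (Sum.inl j)) ∨
    (∃ (i j : Fin n), (j : ℕ) = 0 ∧ a = Sum.inl i ∧ b = Sum.inr (Sum.inr j)) ∨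
    (∃ i j : Fin n, (i : ℕ) + 1 = (j : ℕ) ∧ a = Sum.inr (Sum.inl i) ∧ b = Sum.inr (Sum.inl j)) ∨
    (∃ i j : Fin n, (i : ℕ) + 1 = (j : ℕ) ∧ a = Sum.inr (Sum.inr i) ∧ b = Sum.inr (Sum.inr j)))

/-- `F⁽⁴⁾_n` : `F⁽³⁾_n` with only `x₁, x₂` kept (no edge `x₁x₂`). -/
def F4 (n : ℕ) : SimpleGraph (Fin 2 ⊕ Fin n ⊕ Fin n) :=
  SimpleGraph.fromRel (fun a b =>
    (∃ (i : Fin 2) (j : Fin n), (j : ℕ) = 0 ∧ a = Sum.inl i ∧ b = Sum.inr (Sum.inl j)) ∨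
    (∃ (i : Fin 2) (j : Fin n), (j : ℕ) = 0 ∧ a = Sum.inl i ∧ b = Sum.inr (Sum.inr j)) ∨
    (∃ i j : Fin n, (i : ℕ) + 1 = (j : ℕ) ∧ a = Sum.inr (Sum.inl i) ∧ b = Sum.inr (Sum.inl j)) ∨
    (∃ i j : Fin n, (i : ℕ) + 1 = (j : ℕ) ∧ a = Sum.inr (Sum.inr i) ∧ b = Sum.inr (Sum.inr j)))

/-- `F⁽⁵⁾_n` : `F⁽⁴⁾_n` plus the edge `x₁x₂`. -/
def F5 (n : ℕ) : SimpleGraph (Fin 2 ⊕ Fin n ⊕ Fin n) :=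
  SimpleGraph.fromRel (fun a b =>
    (a = Sum.inl 0 ∧ b = Sum.inl 1) ∨
    (∃ (i : Fin 2) (j : Fin n), (j : ℕ) = 0 ∧ a = Sum.inl i ∧ b = Sum.inr (Sum.inl j)) ∨
    (∃ (i : Fin 2) (j : Fin n), (j : ℕ) = 0 ∧ a = Sum.inl i ∧ b = Sum.inr (Sum.inr j)) ∨
    (∃ i j : Fin n, (i : ℕ) + 1 = (j : ℕ) ∧ a = Sum.inr (Sum.inl i) ∧ b = Sum.inr (Sum.inl j)) ∨
    (∃ i j : Fin n, (i : ℕ) + 1 = (j : ℕ) ∧ a = Sum.inr (Sum.inr i) ∧ b = Sum.inr (Sum.inr j)))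

/-- The Ramsey number `R(a,b)` : least `R` such that every simple graph on at least `R`
vertices contains a clique of size `a` or an independent set of size `b`. -/
noncomputable def ramseyNumber (a b : ℕ) : ℕ :=
  sInf {R : ℕ | ∀ (m : ℕ) (G : SimpleGraph (Fin m)), R ≤ m →
    (∃ s : Finset (Fin m), s.card = a ∧ ∀ u ∈ s, ∀ v ∈ s, u ≠ v → G.Adj u v) ∨
    (∃ s : Finset (Fin m), s.card = b ∧ ∀ u ∈ s, ∀ v ∈ s, u ≠ v → ¬ G.Adj u v)}

/-- `ξ_{n,i} = ((R(n-1,n)-1)^i - 1)/(R(n-1,n)-2)`. -/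
noncomputable def xi (n i : ℕ) : ℕ :=
  ((ramseyNumber (n - 1) n - 1) ^ i - 1) / (ramseyNumber (n - 1) n - 2)


lemma adj_transport {V W : Type*} {G : SimpleGraph V} {H : SimpleGraph W} {S : Set V}
    (φ : (G.induce S) ≃g H) (u v : S) : G.Adj ↑u ↑v ↔ H.Adj (φ u) (φ v) :=
  (φ.map_rel_iff).symm

-- endpoints lemma : a vertex of an induced path with ≤ 1 neighbour in S maps to an endpoint
lemma path_endpoint {V : Type*} {G : SimpleGraph V} {S : Set V} {m : ℕ}
    (φ : (G.induce S) ≃g pathGraph m) (t : S)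
    (hdeg : ∀ u ∈ S, ∀ v ∈ S, G.Adj ↑t u → G.Adj ↑t v → u = v) :
    (φ t).val = 0 ∨ (φ t).val = m - 1 := by
  by_contra h
  push_neg at h
  set p := φ t with hp
  have hm : p.val + 1 < m := by have := p.isLt; omega
  have h0 : 0 < p.val := Nat.pos_of_ne_zero h.1
  set q1 : Fin m := ⟨p.val - 1, by omega⟩
  set q2 : Fin m := ⟨p.val + 1, hm⟩
  have a1 : G.Adj ↑t ↑(φ.symm q1) := by
    rw [adj_transport φ t (φ.symm q1), RelIso.apply_symm_apply]
    rw [pathGraph_adj]; right; simp [q1]; omega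
  have a2 : G.Adj ↑t ↑(φ.symm q2) := by
    rw [adj_transport φ t (φ.symm q2), RelIso.apply_symm_apply]
    rw [pathGraph_adj]; left; simp [q2, hp]
  have := hdeg _ (φ.symm q1).2 _ (φ.symm q2).2 a1 a2
  have : q1 = q2 := by
    have h12 : φ.symm q1 = φ.symm q2 := Subtype.ext this
    simpa using congrArg φ h12
  have : p.val - 1 = p.val + 1 := congrArg Fin.val this
  omega

lemma path_no_three {V : Type*} {G : SimpleGraph V} {S : Set V}
    (h : IsInducedPathSet G S) (a b c : V) (ha : a ∈ S) (hb : b ∈ S) (hc : c ∈ S)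
    (hab : a ≠ b) (hac : a ≠ c) (hbc : b ≠ c)
    (hdeg : ∀ t ∈ S, (t = a ∨ t = b ∨ t = c) →
      ∀ u ∈ S, ∀ v ∈ S, G.Adj t u → G.Adj t v → u = v) : False := by
  obtain ⟨m, hm, ⟨φ⟩⟩ := h
  have ea := path_endpoint φ ⟨a, ha⟩ (hdeg a ha (Or.inl rfl))
  have eb := path_endpoint φ ⟨b, hb⟩ (hdeg b hb (Or.inr (Or.inl rfl)))
  have ec := path_endpoint φ ⟨c, hc⟩ (hdeg c hc (Or.inr (Or.inr rfl)))
  have key : ∀ (u v : S), (φ u).val = (φ v).val → (u : V) = v := by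
    intro u v huv
    have : φ u = φ v := Fin.ext huv
    exact congrArg Subtype.val (φ.injective this)
  have : (φ ⟨a, ha⟩).val = (φ ⟨b, hb⟩).val ∨ (φ ⟨a, ha⟩).val = (φ ⟨c, hc⟩).val ∨
      (φ ⟨b, hb⟩).val = (φ ⟨c, hc⟩).val := by omega
  rcases this with h' | h' | h'
  · exact hab (key _ _ h')
  · exact hac (key _ _ h')
  · exact hbc (key _ _ h')

lemma star_no_three {V : Type*} {G : SimpleGraph V} {S : Set V}
    (h : IsInducedStarSet G S) (a b c : V) (ha : a ∈ S) (hb : b ∈ S) (hc : c ∈ S)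
    (hab : a ≠ b) (hac : a ≠ c) (hbc : b ≠ c)
    (hdeg : ∀ t ∈ S, (t = a ∨ t = b ∨ t = c) →
      ∀ u ∈ S, ∀ v ∈ S, G.Adj t u → G.Adj t v → u = v)
    (hcom : ∀ t ∈ S, ∀ t' ∈ S, (t = a ∨ t = b ∨ t = c) → (t' = a ∨ t' = b ∨ t' = c) →
      t ≠ t' → ∀ u ∈ S, G.Adj t u → G.Adj t' u → False) : False := by
  obtain ⟨m, hm, ⟨φ⟩⟩ := h
  -- no two of a,b,c can both be leaves
  have claim : ∀ (t t' : V) (ht : t ∈ S) (ht' : t' ∈ S),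
      (t = a ∨ t = b ∨ t = c) → (t' = a ∨ t' = b ∨ t' = c) → t ≠ t' →
      ∀ p, φ ⟨t, ht⟩ = Sum.inr p → ∀ p', φ ⟨t', ht'⟩ = Sum.inr p' → False := by
    intro t t' ht ht' hmem hmem' hne p hp p' hp'
    set w := φ.symm (Sum.inl ())
    have aw : G.Adj t ↑w := by
      rw [adj_transport φ ⟨t, ht⟩ w, RelIso.apply_symm_apply, hp]
      exact Or.inr ⟨rfl, rfl⟩
    have aw' : G.Adj t' ↑w := by
      rw [adj_transport φ ⟨t', ht'⟩ w, RelIso.apply_symm_apply, hp']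
      exact Or.inr ⟨rfl, rfl⟩
    exact hcom t ht t' ht' hmem hmem' hne ↑w w.2 aw aw'
  have inj2 : ∀ (t t' : V) (ht : t ∈ S) (ht' : t' ∈ S), t ≠ t' →
      φ ⟨t, ht⟩ = Sum.inl () → φ ⟨t', ht'⟩ = Sum.inl () → False := by
    intro t t' ht ht' hne h1 h2
    exact hne (congrArg Subtype.val (φ.injective (h1.trans h2.symm)))
  cases hqa : φ ⟨a, ha⟩ with
  | inl u =>
    cases hqb : φ ⟨b, hb⟩ with
    | inl u' => exact inj2 a b ha hb hab (by rw [hqa]) (by rw [hqb])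
    | inr p =>
      cases hqc : φ ⟨c, hc⟩ with
      | inl u'' => exact inj2 a c ha hc hac (by rw [hqa]) (by rw [hqc])
      | inr p' => exact claim b c hb hc (Or.inr (Or.inl rfl)) (Or.inr (Or.inr rfl)) hbc p hqb p' hqc
  | inr p =>
    cases hqb : φ ⟨b, hb⟩ with
    | inl u' =>
      cases hqc : φ ⟨c, hc⟩ with
      | inl u'' => exact inj2 b c hb hc hbc (by rw [hqb]) (by rw [hqc])
      | inr p' => exact claim a c ha hc (Or.inl rfl) (Or.inr (Or.inr rfl)) hac p hqa p' hqc
    | inr p' => exact claim a b ha hb (Or.inl rfl) (Or.inr (Or.inl rfl)) hab p hqa p' hqb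

/-- In an induced star/path set where every vertex has at most one neighbour inside `S`,
any two distinct elements are adjacent. -/
lemma sp_adj_of_deg_one {V : Type*} {G : SimpleGraph V} {S : Set V}
    (h : IsInducedStarSet G S ∨ IsInducedPathSet G S)
    (hdeg : ∀ t ∈ S, ∀ u ∈ S, ∀ v ∈ S, G.Adj t u → G.Adj t v → u = v)
    (a b : V) (ha : a ∈ S) (hb : b ∈ S) (hne : a ≠ b) : G.Adj a b := by
  rcases h with ⟨m, hm, ⟨φ⟩⟩ | ⟨m, hm, ⟨φ⟩⟩
  · -- star case
    cases hqa : φ ⟨a, ha⟩ with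
    | inl u =>
      cases hqb : φ ⟨b, hb⟩ with
      | inl u' =>
        exact absurd (congrArg Subtype.val (φ.injective (hqa.trans hqb.symm))) hne
      | inr p =>
        rw [adj_transport φ ⟨a, ha⟩ ⟨b, hb⟩, hqa, hqb]
        exact Or.inl ⟨rfl, rfl⟩
    | inr p =>
      cases hqb : φ ⟨b, hb⟩ with
      | inl u' =>
        rw [adj_transport φ ⟨a, ha⟩ ⟨b, hb⟩, hqa, hqb]
        exact Or.inr ⟨rfl, rfl⟩
      | inr p' =>
        exfalso
        set w := φ.symm (Sum.inl ())
        have aw : G.Adj ↑w a := by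
          rw [adj_transport φ w ⟨a, ha⟩, RelIso.apply_symm_apply, hqa]
          exact Or.inl ⟨rfl, rfl⟩
        have aw' : G.Adj ↑w b := by
          rw [adj_transport φ w ⟨b, hb⟩, RelIso.apply_symm_apply, hqb]
          exact Or.inl ⟨rfl, rfl⟩
        exact hne (hdeg ↑w w.2 a ha b hb aw aw')
  · -- path case
    have hm2 : m ≤ 2 := by
      by_contra hm3
      push_neg at hm3
      set t := φ.symm ⟨1, by omega⟩
      have e := path_endpoint φ t (hdeg ↑t t.2)
      rw [RelIso.apply_symm_apply] at e
      simp only at e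
      omega
    have e1 := path_endpoint φ ⟨a, ha⟩ (hdeg a ha)
    have e2 := path_endpoint φ ⟨b, hb⟩ (hdeg b hb)
    have hne' : φ ⟨a, ha⟩ ≠ φ ⟨b, hb⟩ := by
      intro h'
      exact hne (congrArg Subtype.val (φ.injective h'))
    rw [adj_transport φ ⟨a, ha⟩ ⟨b, hb⟩, pathGraph_adj]
    have := (φ ⟨a, ha⟩).isLt
    have := (φ ⟨b, hb⟩).isLt
    have hv : (φ ⟨a, ha⟩).val ≠ (φ ⟨b, hb⟩).val := fun h' => hne' (Fin.ext h')
    omega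

/-- Induced stars and paths are triangle-free. -/
lemma sp_triangle_free {V : Type*} {G : SimpleGraph V} {S : Set V}
    (h : IsInducedStarSet G S ∨ IsInducedPathSet G S)
    (a b c : V) (ha : a ∈ S) (hb : b ∈ S) (hc : c ∈ S)
    (hab : G.Adj a b) (hac : G.Adj a c) (hbc : G.Adj b c) : False := by
  rcases h with ⟨m, hm, ⟨φ⟩⟩ | ⟨m, hm, ⟨φ⟩⟩
  · rw [adj_transport φ ⟨a, ha⟩ ⟨b, hb⟩] at hab
    rw [adj_transport φ ⟨a, ha⟩ ⟨c, hc⟩] at hac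
    rw [adj_transport φ ⟨b, hb⟩ ⟨c, hc⟩] at hbc
    rcases hA : φ ⟨a, ha⟩ with u | p <;> rcases hB : φ ⟨b, hb⟩ with u' | p' <;>
      rcases hC : φ ⟨c, hc⟩ with u'' | p'' <;> rw [hA, hB] at hab <;>
      rw [hA, hC] at hac <;> rw [hB, hC] at hbc <;> simp_all [starGraphK1]
  · rw [adj_transport φ ⟨a, ha⟩ ⟨b, hb⟩, pathGraph_adj] at hab
    rw [adj_transport φ ⟨a, ha⟩ ⟨c, hc⟩, pathGraph_adj] at hac
    rw [adj_transport φ ⟨b, hb⟩ ⟨c, hc⟩, pathGraph_adj] at hbc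
    omega

lemma induce_iso_of_emb {V W : Type*} (G : SimpleGraph V) (H : SimpleGraph W)
    (f : W → V) (hinj : Function.Injective f)
    (h : ∀ a b, G.Adj (f a) (f b) ↔ H.Adj a b) :
    Nonempty ((G.induce (Set.range f)) ≃g H) := by
  refine ⟨⟨(Equiv.ofInjective f hinj).symm, ?_⟩⟩
  intro a b
  show H.Adj _ _ ↔ _
  rw [← h, Equiv.apply_ofInjective_symm hinj a, Equiv.apply_ofInjective_symm hinj b]
  exact Iff.rfl

lemma isPathSet_range' {V : Type*} (G : SimpleGraph V) {m : ℕ} (hm : 1 ≤ m)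
    (f : Fin m → V) (hinj : Function.Injective f)
    (h : ∀ a b, G.Adj (f a) (f b) ↔ (pathGraph m).Adj a b) :
    IsInducedPathSet G (Set.range f) :=
  ⟨m, hm, induce_iso_of_emb G _ f hinj h⟩

lemma isStarSet_range' {V : Type*} (G : SimpleGraph V) {m : ℕ} (hm : 1 ≤ m)
    (f : Unit ⊕ Fin m → V) (hinj : Function.Injective f)
    (h : ∀ a b, G.Adj (f a) (f b) ↔ (starGraphK1 m).Adj a b) :
    IsInducedStarSet G (Set.range f) :=
  ⟨m, hm, induce_iso_of_emb G _ f hinj h⟩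

lemma isPathSet_singleton {V : Type*} (G : SimpleGraph V) (v : V) :
    IsInducedPathSet G {v} := by
  have e : ({v} : Set V) = Set.range (fun _ : Fin 1 => v) := by
    simp [Set.range_const]
  rw [e]
  apply isPathSet_range' G le_rfl _ (fun a b _ => Subsingleton.elim a b)
  intro a b
  have : a = b := Subsingleton.elim a b
  subst this
  simp [pathGraph_adj]

lemma isPathSet_pair {V : Type*} (G : SimpleGraph V) {u v : V} (h : G.Adj u v) :
    IsInducedPathSet G {u, v} := by
  have hne := G.ne_of_adj h
  have e : ({u, v} : Set V) = Set.range (fun k : Fin 2 => if k.val = 0 then u else v) := by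
    ext w
    constructor
    · rintro (rfl | rfl)
      · exact ⟨0, rfl⟩
      · exact ⟨1, rfl⟩
    · rintro ⟨k, rfl⟩
      by_cases hk : k.val = 0 <;> simp [hk]
  rw [e]
  apply isPathSet_range' G (by omega)
  · intro a b hab
    have h1 : a.val = 0 ∨ a.val = 1 := by omega
    have h2 : b.val = 0 ∨ b.val = 1 := by omega
    rcases h1 with h1 | h1 <;> rcases h2 with h2 | h2
    · exact Fin.ext (by omega)
    · simp [h1, h2] at hab; exact absurd hab hne
    · simp [h1, h2] at hab; exact absurd hab.symm hne
    · exact Fin.ext (by omega)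
  · intro a b
    have h1 : a.val = 0 ∨ a.val = 1 := by omega
    have h2 : b.val = 0 ∨ b.val = 1 := by omega
    rcases h1 with h1 | h1 <;> rcases h2 with h2 | h2
    · simp [h1, h2, pathGraph_adj, G.irrefl]
    · simpa [h1, h2, pathGraph_adj] using h
    · simpa [h1, h2, pathGraph_adj] using h.symm
    · simp [h1, h2, pathGraph_adj, G.irrefl]

lemma isPathSet_triple {V : Type*} (G : SimpleGraph V) {a b c : V}
    (hab : G.Adj a b) (hbc : G.Adj b c) (hac : ¬ G.Adj a c) (hac' : a ≠ c) :
    IsInducedPathSet G {a, b, c} := by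
  have e : ({a, b, c} : Set V) = Set.range
      (fun k : Fin 3 => if k.val = 0 then a else if k.val = 1 then b else c) := by
    ext w
    constructor
    · rintro (rfl | rfl | rfl)
      · exact ⟨0, rfl⟩
      · exact ⟨1, rfl⟩
      · exact ⟨2, rfl⟩
    · rintro ⟨k, rfl⟩
      by_cases h0 : k.val = 0
      · simp [h0]
      · by_cases h1 : k.val = 1 <;> simp [h0, h1]
  rw [e]
  apply isPathSet_range' G (by omega)
  · intro p q hpq
    have h1 : p.val = 0 ∨ p.val = 1 ∨ p.val = 2 := by omega
    have h2 : q.val = 0 ∨ q.val = 1 ∨ q.val = 2 := by omega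
    have nab := G.ne_of_adj hab
    have nbc := G.ne_of_adj hbc
    rcases h1 with h1 | h1 | h1 <;> rcases h2 with h2 | h2 | h2 <;>
      simp [h1, h2] at hpq ⊢ <;> first
        | (exact Fin.ext (by omega))
        | exact absurd hpq nab | exact absurd hpq.symm nab
        | exact absurd hpq nbc | exact absurd hpq.symm nbc
        | exact absurd hpq hac' | exact absurd hpq.symm hac'
  · intro p q
    have h1 : p.val = 0 ∨ p.val = 1 ∨ p.val = 2 := by omega
    have h2 : q.val = 0 ∨ q.val = 1 ∨ q.val = 2 := by omega
    rcases h1 with h1 | h1 | h1 <;> rcases h2 with h2 | h2 | h2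
    · simp [h1, h2, pathGraph_adj, G.irrefl]
    · simpa [h1, h2, pathGraph_adj] using hab
    · simpa [h1, h2, pathGraph_adj] using hac
    · simpa [h1, h2, pathGraph_adj] using hab.symm
    · simp [h1, h2, pathGraph_adj, G.irrefl]
    · simpa [h1, h2, pathGraph_adj] using hbc
    · simpa [h1, h2, pathGraph_adj] using fun h' => hac h'.symm
    · simpa [h1, h2, pathGraph_adj] using hbc.symm
    · simp [h1, h2, pathGraph_adj, G.irrefl]

lemma isStarSet_pair {V : Type*} (G : SimpleGraph V) {u v : V} (h : G.Adj u v) :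
    IsInducedStarSet G {u, v} := by
  have hne := G.ne_of_adj h
  have e : ({u, v} : Set V) = Set.range (Sum.elim (fun _ : Unit => u) (fun _ : Fin 1 => v)) := by
    ext w
    constructor
    · rintro (rfl | rfl)
      · exact ⟨Sum.inl (), rfl⟩
      · exact ⟨Sum.inr 0, rfl⟩
    · rintro ⟨(k | k), rfl⟩ <;> simp
  rw [e]
  apply isStarSet_range' G le_rfl
  · rintro (p | p) (q | q) hpq
    · rfl
    · exact absurd hpq hne
    · exact absurd hpq.symm hne
    · simp [Subsingleton.elim p q]
  · rintro (p | p) (q | q)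
    · simpa [starGraphK1] using G.irrefl
    · simpa [starGraphK1] using h
    · simpa [starGraphK1] using h.symm
    · simpa [starGraphK1] using G.irrefl

lemma isStarSet_triple {V : Type*} (G : SimpleGraph V) {a b c : V}
    (hab : G.Adj b a) (hbc : G.Adj b c) (hac : ¬ G.Adj a c) (hac' : a ≠ c) :
    IsInducedStarSet G {a, b, c} := by
  have nab := G.ne_of_adj hab
  have nbc := G.ne_of_adj hbc
  have e : ({a, b, c} : Set V) = Set.range
      (Sum.elim (fun _ : Unit => b) (fun k : Fin 2 => if k.val = 0 then a else c)) := by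
    ext w
    constructor
    · rintro (rfl | rfl | rfl)
      · exact ⟨Sum.inr 0, rfl⟩
      · exact ⟨Sum.inl (), rfl⟩
      · exact ⟨Sum.inr 1, rfl⟩
    · rintro ⟨(k | k), rfl⟩
      · simp
      · by_cases h0 : k = 0 <;> simp [h0]
  rw [e]
  apply isStarSet_range' G (by omega)
  · rintro (p | p) (q | q) hpq
    · rfl
    · simp only [Sum.elim_inl, Sum.elim_inr] at hpq
      by_cases h0 : q.val = 0 <;> simp [h0] at hpq <;>
        first
        | exact absurd hpq nab
        | exact absurd hpq nbc
        | exact absurd hpq.symm nab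
        | exact absurd hpq.symm nbc
    · simp only [Sum.elim_inl, Sum.elim_inr] at hpq
      by_cases h0 : p.val = 0 <;> simp [h0] at hpq <;>
        first
        | exact absurd hpq nab
        | exact absurd hpq nbc
        | exact absurd hpq.symm nab
        | exact absurd hpq.symm nbc
    · simp only [Sum.elim_inr] at hpq
      have h1 : p.val = 0 ∨ p.val = 1 := by omega
      have h2 : q.val = 0 ∨ q.val = 1 := by omega
      rcases h1 with h1 | h1 <;> rcases h2 with h2 | h2 <;> simp [h1, h2] at hpq ⊢ <;>
        first | (exact Fin.ext (by omega)) | exact absurd hpq hac' | exact absurd hpq.symm hac'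
  · rintro (p | p) (q | q)
    · simpa [starGraphK1] using G.irrefl
    · by_cases h0 : q = 0 <;> simp [starGraphK1, h0] <;>
        first | exact hab | exact hbc
    · by_cases h0 : p = 0 <;> simp [starGraphK1, h0] <;>
        first | exact hab.symm | exact hbc.symm
    · have h1 : p.val = 0 ∨ p.val = 1 := by omega
      have h2 : q.val = 0 ∨ q.val = 1 := by omega
      rcases h1 with h1 | h1 <;> rcases h2 with h2 | h2
      · simp [starGraphK1, h1, h2, G.irrefl, show p = 0 from Fin.ext h1, show q = 0 from Fin.ext h2]
      · simpa [starGraphK1, h1, h2, show p = 0 from Fin.ext h1, show q = 1 from Fin.ext h2] using hac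
      · simpa [starGraphK1, h1, h2, show p = 1 from Fin.ext h1, show q = 0 from Fin.ext h2] using fun h' => hac h'.symm
      · simp [starGraphK1, h1, h2, G.irrefl, show p = 1 from Fin.ext h1, show q = 1 from Fin.ext h2]

lemma cover_count {V : Type*} [DecidableEq V] (c : ℕ) (P : Finset (Set V)) (T : Finset V)
    (hcov : ∀ v ∈ T, ∃ S ∈ P, v ∈ S)
    (hbd : ∀ S ∈ P, ∀ (F : Finset V), (∀ v ∈ F, v ∈ S ∧ v ∈ T) → c < F.card → False) :
    T.card ≤ c * P.card := by
  classical
  have hsub : T ⊆ P.biUnion (fun S => T.filter (fun v => v ∈ S)) := by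
    intro v hv
    obtain ⟨S, hS, hvS⟩ := hcov v hv
    exact Finset.mem_biUnion.2 ⟨S, hS, Finset.mem_filter.2 ⟨hv, hvS⟩⟩
  calc T.card ≤ (P.biUnion (fun S => T.filter (fun v => v ∈ S))).card := Finset.card_le_card hsub
    _ ≤ ∑ S ∈ P, (T.filter (fun v => v ∈ S)).card := Finset.card_biUnion_le
    _ ≤ ∑ S ∈ P, c := by
        refine Finset.sum_le_sum fun S hS => ?_
        by_contra hlt
        push_neg at hlt
        exact hbd S hS _ (fun v hv => ⟨(Finset.mem_filter.1 hv).2, (Finset.mem_filter.1 hv).1⟩) hlt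
    _ = c * P.card := by rw [Finset.sum_const, smul_eq_mul, mul_comm]

lemma coverNumber_eq_of {V : Type*} {pred : Set V → Prop} {k : ℕ}
    (P : Finset (Set V)) (hcard : P.card = k) (hP : IsCoverBy P pred)
    (hlb : ∀ Q : Finset (Set V), IsCoverBy Q pred → k ≤ Q.card) :
    coverNumber pred = k := by
  have hmem : k ∈ {k | ∃ P : Finset (Set V), P.card = k ∧ IsCoverBy P pred} := ⟨P, hcard, hP⟩
  apply le_antisymm (Nat.sInf_le hmem)
  refine le_csInf ⟨k, hmem⟩ ?_
  rintro m ⟨Q, rfl, hQ⟩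
  exact hlb Q hQ

lemma partitionNumber_eq_of {V : Type*} {pred : Set V → Prop} {k : ℕ}
    (P : Finset (Set V)) (hcard : P.card = k) (hP : IsPartitionBy P pred)
    (hlb : ∀ Q : Finset (Set V), IsPartitionBy Q pred → k ≤ Q.card) :
    partitionNumber pred = k := by
  have hmem : k ∈ {k | ∃ P : Finset (Set V), P.card = k ∧ IsPartitionBy P pred} := ⟨P, hcard, hP⟩
  apply le_antisymm (Nat.sInf_le hmem)
  refine le_csInf ⟨k, hmem⟩ ?_
  rintro m ⟨Q, rfl, hQ⟩
  exact hlb Q hQ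

lemma part1 (n : ℕ) (hn : 2 ≤ n) : inspc (completeGraph (Fin n)) = (n + 1) / 2 := by
  classical
  apply coverNumber_eq_of ((Finset.range ((n + 1) / 2)).image
    (fun i => {v : Fin n | v.val / 2 = i}))
  · rw [Finset.card_image_of_injOn, Finset.card_range]
    intro i hi j hj hij
    simp only [Finset.coe_range, Set.mem_Iio] at hi hj
    have h2i : 2 * i < n := by omega
    have hmem : (⟨2 * i, h2i⟩ : Fin n) ∈ {v : Fin n | v.val / 2 = i} := by
      simp only [Set.mem_setOf_eq]
      omega
    have hij' : {v : Fin n | v.val / 2 = i} = {v : Fin n | v.val / 2 = j} := hij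
    rw [hij'] at hmem
    simp only [Set.mem_setOf_eq] at hmem
    omega
  · constructor
    · intro S hS
      simp only [Finset.mem_image, Finset.mem_range] at hS
      obtain ⟨i, hi, rfl⟩ := hS
      have h2i : 2 * i < n := by omega
      by_cases h2i1 : 2 * i + 1 < n
      · -- pair
        right
        have e : {v : Fin n | v.val / 2 = i} = ({⟨2 * i, h2i⟩, ⟨2 * i + 1, h2i1⟩} : Set (Fin n)) := by
          ext v
          simp [Fin.ext_iff]
          omega
        rw [e]
        exact isPathSet_pair _ (by simp [Fin.ext_iff])
      · -- singleton
        right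
        have e : {v : Fin n | v.val / 2 = i} = ({⟨2 * i, h2i⟩} : Set (Fin n)) := by
          ext v
          simp [Fin.ext_iff]
          omega
        rw [e]
        exact isPathSet_singleton _ _
    · intro v
      refine ⟨{w : Fin n | w.val / 2 = v.val / 2}, ?_, rfl⟩
      apply Finset.mem_image_of_mem
      rw [Finset.mem_range]
      have := v.isLt
      omega
  · intro Q hQ
    have hcnt : (Finset.univ : Finset (Fin n)).card ≤ 2 * Q.card := by
      apply cover_count
      · intro v _
        exact hQ.2 v
      · intro S hS F hF hcard
        obtain ⟨a, b, c, ha, hb, hc, hab, hac, hbc⟩ := Finset.two_lt_card_iff.1 hcard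
        exact sp_triangle_free (hQ.1 S hS) a b c (hF a ha).1 (hF b hb).1 (hF c hc).1
          hab hac hbc
    rw [Finset.card_univ, Fintype.card_fin] at hcnt
    omega

lemma SStar_adj {n : ℕ} (a b : Unit ⊕ Fin n ⊕ Fin n) :
    (SStar n).Adj a b ↔ ∃ i : Fin n,
      (a = Sum.inl () ∧ b = Sum.inr (Sum.inl i)) ∨
      (b = Sum.inl () ∧ a = Sum.inr (Sum.inl i)) ∨
      (a = Sum.inr (Sum.inl i) ∧ b = Sum.inr (Sum.inr i)) ∨
      (b = Sum.inr (Sum.inl i) ∧ a = Sum.inr (Sum.inr i)) := by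
  rw [SStar, SimpleGraph.fromRel_adj]
  constructor
  · rintro ⟨hne, (⟨i, h1, h2⟩ | ⟨i, h1, h2⟩) | (⟨i, h1, h2⟩ | ⟨i, h1, h2⟩)⟩
    · exact ⟨i, Or.inl ⟨h1, h2⟩⟩
    · exact ⟨i, Or.inr (Or.inr (Or.inl ⟨h1, h2⟩))⟩
    · exact ⟨i, Or.inr (Or.inl ⟨h1, h2⟩)⟩
    · exact ⟨i, Or.inr (Or.inr (Or.inr ⟨h1, h2⟩))⟩
  · rintro ⟨i, (⟨h1, h2⟩ | ⟨h1, h2⟩ | ⟨h1, h2⟩ | ⟨h1, h2⟩)⟩ <;> subst h1 <;> subst h2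
    · exact ⟨by simp, Or.inl (Or.inl ⟨i, rfl, rfl⟩)⟩
    · exact ⟨by simp, Or.inr (Or.inl ⟨i, rfl, rfl⟩)⟩
    · exact ⟨by simp, Or.inl (Or.inr ⟨i, rfl, rfl⟩)⟩
    · exact ⟨by simp, Or.inr (Or.inr ⟨i, rfl, rfl⟩)⟩

lemma STilde_adj {n : ℕ} (a b : Unit ⊕ Fin n ⊕ Fin n) :
    (STilde n).Adj a b ↔ ∃ i : Fin n,
      (a = Sum.inl () ∧ (b = Sum.inr (Sum.inl i) ∨ b = Sum.inr (Sum.inr i))) ∨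
      (b = Sum.inl () ∧ (a = Sum.inr (Sum.inl i) ∨ a = Sum.inr (Sum.inr i))) ∨
      (a = Sum.inr (Sum.inl i) ∧ b = Sum.inr (Sum.inr i)) ∨
      (b = Sum.inr (Sum.inl i) ∧ a = Sum.inr (Sum.inr i)) := by
  rw [STilde, SimpleGraph.fromRel_adj]
  constructor
  · rintro ⟨hne, (⟨i, h1, h2⟩ | ⟨i, h1, h2⟩ | ⟨i, h1, h2⟩) | (⟨i, h1, h2⟩ | ⟨i, h1, h2⟩ | ⟨i, h1, h2⟩)⟩
    · exact ⟨i, Or.inl ⟨h1, Or.inl h2⟩⟩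
    · exact ⟨i, Or.inr (Or.inr (Or.inl ⟨h1, h2⟩))⟩
    · exact ⟨i, Or.inl ⟨h1, Or.inr h2⟩⟩
    · exact ⟨i, Or.inr (Or.inl ⟨h1, Or.inl h2⟩)⟩
    · exact ⟨i, Or.inr (Or.inr (Or.inr ⟨h1, h2⟩))⟩
    · exact ⟨i, Or.inr (Or.inl ⟨h1, Or.inr h2⟩)⟩
  · rintro ⟨i, (⟨h1, (h2 | h2)⟩ | ⟨h1, (h2 | h2)⟩ | ⟨h1, h2⟩ | ⟨h1, h2⟩)⟩ <;> subst h1 <;> subst h2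
    · exact ⟨by simp, Or.inl (Or.inl ⟨i, rfl, rfl⟩)⟩
    · exact ⟨by simp, Or.inl (Or.inr (Or.inr ⟨i, rfl, rfl⟩))⟩
    · exact ⟨by simp, Or.inr (Or.inl ⟨i, rfl, rfl⟩)⟩
    · exact ⟨by simp, Or.inr (Or.inr (Or.inr ⟨i, rfl, rfl⟩))⟩
    · exact ⟨by simp, Or.inl (Or.inr (Or.inl ⟨i, rfl, rfl⟩))⟩
    · exact ⟨by simp, Or.inr (Or.inr (Or.inl ⟨i, rfl, rfl⟩))⟩

lemma SStar_z_adj {n : ℕ} (i : Fin n) (u : Unit ⊕ Fin n ⊕ Fin n) :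
    (SStar n).Adj (Sum.inr (Sum.inr i)) u ↔ u = Sum.inr (Sum.inl i) := by
  rw [SStar_adj]
  constructor
  · rintro ⟨j, (⟨h1, h2⟩ | ⟨h1, h2⟩ | ⟨h1, h2⟩ | ⟨h1, h2⟩)⟩ <;> simp_all
  · rintro rfl
    exact ⟨i, Or.inr (Or.inr (Or.inr ⟨rfl, rfl⟩))⟩

lemma SStar_P5 {n : ℕ} (j0 j1 : Fin n) (hj : j0 ≠ j1) :
    IsInducedPathSet (SStar n) (Set.range (fun k : Fin 5 =>
      if k.val = 0 then Sum.inr (Sum.inr j0) else if k.val = 1 then Sum.inr (Sum.inl j0)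
      else if k.val = 2 then Sum.inl () else if k.val = 3 then Sum.inr (Sum.inl j1)
      else Sum.inr (Sum.inr j1) : Fin 5 → Unit ⊕ Fin n ⊕ Fin n)) := by
  apply isPathSet_range' _ (by omega)
  · intro p q hpq
    have h1 : p.val = 0 ∨ p.val = 1 ∨ p.val = 2 ∨ p.val = 3 ∨ p.val = 4 := by omega
    have h2 : q.val = 0 ∨ q.val = 1 ∨ q.val = 2 ∨ q.val = 3 ∨ q.val = 4 := by omega
    rcases h1 with h1 | h1 | h1 | h1 | h1 <;> rcases h2 with h2 | h2 | h2 | h2 | h2 <;>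
      first
      | exact Fin.ext (by omega)
      | (exfalso; revert hpq; simp [h1, h2, hj, hj.symm])
  · intro p q
    have h1 : p.val = 0 ∨ p.val = 1 ∨ p.val = 2 ∨ p.val = 3 ∨ p.val = 4 := by omega
    have h2 : q.val = 0 ∨ q.val = 1 ∨ q.val = 2 ∨ q.val = 3 ∨ q.val = 4 := by omega
    rcases h1 with h1 | h1 | h1 | h1 | h1 <;> rcases h2 with h2 | h2 | h2 | h2 | h2 <;>
      simp [h1, h2, SStar_adj, pathGraph_adj, hj, hj.symm]

lemma part2 (n : ℕ) (hn : 2 ≤ n) : inspc (SStar n) = (n + 1) / 2 := by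
  classical
  apply coverNumber_eq_of ((Finset.range ((n + 1) / 2)).image
    (fun i => {v : Unit ⊕ Fin n ⊕ Fin n | v = Sum.inl () ∨
      ∃ j : Fin n, j.val / 2 = i ∧ (v = Sum.inr (Sum.inl j) ∨ v = Sum.inr (Sum.inr j))}))
  · rw [Finset.card_image_of_injOn, Finset.card_range]
    intro i hi j hj hij
    simp only [Finset.coe_range, Set.mem_Iio] at hi hj
    have h2i : 2 * i < n := by omega
    have hmem : Sum.inr (Sum.inl (⟨2 * i, h2i⟩ : Fin n)) ∈
        {v : Unit ⊕ Fin n ⊕ Fin n | v = Sum.inl () ∨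
          ∃ j : Fin n, j.val / 2 = i ∧ (v = Sum.inr (Sum.inl j) ∨ v = Sum.inr (Sum.inr j))} := by
      right
      exact ⟨⟨2 * i, h2i⟩, by simp only [Fin.val_mk]; omega, Or.inl rfl⟩
    have hij' : {v : Unit ⊕ Fin n ⊕ Fin n | v = Sum.inl () ∨
          ∃ k : Fin n, k.val / 2 = i ∧ (v = Sum.inr (Sum.inl k) ∨ v = Sum.inr (Sum.inr k))} =
        {v : Unit ⊕ Fin n ⊕ Fin n | v = Sum.inl () ∨
          ∃ k : Fin n, k.val / 2 = j ∧ (v = Sum.inr (Sum.inl k) ∨ v = Sum.inr (Sum.inr k))} := hij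
    rw [hij'] at hmem
    rcases hmem with h | ⟨k, hk, hk'⟩
    · exact absurd h (by simp)
    · rcases hk' with h | h
      · simp only [Sum.inr.injEq, Sum.inl.injEq] at h
        subst h
        have hx : (2 * i) / 2 = j := hk
        omega
      · simp at h
  · constructor
    · intro S hS
      simp only [Finset.mem_image, Finset.mem_range] at hS
      obtain ⟨i, hi, rfl⟩ := hS
      right
      have h2i : 2 * i < n := by omega
      by_cases h2i1 : 2 * i + 1 < n
      · have e : {v : Unit ⊕ Fin n ⊕ Fin n | v = Sum.inl () ∨
            ∃ j : Fin n, j.val / 2 = i ∧ (v = Sum.inr (Sum.inl j) ∨ v = Sum.inr (Sum.inr j))} =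
            Set.range (fun k : Fin 5 =>
              if k.val = 0 then Sum.inr (Sum.inr (⟨2 * i, h2i⟩ : Fin n))
              else if k.val = 1 then Sum.inr (Sum.inl (⟨2 * i, h2i⟩ : Fin n))
              else if k.val = 2 then Sum.inl ()
              else if k.val = 3 then Sum.inr (Sum.inl (⟨2 * i + 1, h2i1⟩ : Fin n))
              else Sum.inr (Sum.inr (⟨2 * i + 1, h2i1⟩ : Fin n))) := by
          ext v
          simp only [Set.mem_setOf_eq, Set.mem_range]
          constructor
          · rintro (rfl | ⟨j, hj, (rfl | rfl)⟩)
            · exact ⟨2, rfl⟩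
            · have hor : j.val = 2 * i ∨ j.val = 2 * i + 1 := by omega
              rcases hor with h | h
              · have hj' : j = (⟨2 * i, h2i⟩ : Fin n) := Fin.ext h
                subst hj'
                exact ⟨1, rfl⟩
              · have hj' : j = (⟨2 * i + 1, h2i1⟩ : Fin n) := Fin.ext h
                subst hj'
                exact ⟨3, rfl⟩
            · have hor : j.val = 2 * i ∨ j.val = 2 * i + 1 := by omega
              rcases hor with h | h
              · have hj' : j = (⟨2 * i, h2i⟩ : Fin n) := Fin.ext h
                subst hj'
                exact ⟨0, rfl⟩
              · have hj' : j = (⟨2 * i + 1, h2i1⟩ : Fin n) := Fin.ext h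
                subst hj'
                exact ⟨4, rfl⟩
          · rintro ⟨k, rfl⟩
            have hk : k.val = 0 ∨ k.val = 1 ∨ k.val = 2 ∨ k.val = 3 ∨ k.val = 4 := by omega
            rcases hk with h | h | h | h | h
            · exact Or.inr ⟨⟨2 * i, h2i⟩, by simp only [Fin.val_mk]; omega, Or.inr (by simp [h])⟩
            · exact Or.inr ⟨⟨2 * i, h2i⟩, by simp only [Fin.val_mk]; omega, Or.inl (by simp [h])⟩
            · exact Or.inl (by simp [h])
            · exact Or.inr ⟨⟨2 * i + 1, h2i1⟩, by simp only [Fin.val_mk]; omega, Or.inl (by simp [h])⟩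
            · exact Or.inr ⟨⟨2 * i + 1, h2i1⟩, by simp only [Fin.val_mk]; omega, Or.inr (by simp [h])⟩
        rw [e]
        exact SStar_P5 _ _ (by simp only [ne_eq, Fin.mk.injEq]; omega)
      · have e : {v : Unit ⊕ Fin n ⊕ Fin n | v = Sum.inl () ∨
            ∃ j : Fin n, j.val / 2 = i ∧ (v = Sum.inr (Sum.inl j) ∨ v = Sum.inr (Sum.inr j))} =
            {Sum.inl (), Sum.inr (Sum.inl (⟨2 * i, h2i⟩ : Fin n)),
              Sum.inr (Sum.inr (⟨2 * i, h2i⟩ : Fin n))} := by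
          ext v
          simp only [Set.mem_setOf_eq, Set.mem_insert_iff, Set.mem_singleton_iff]
          constructor
          · rintro (rfl | ⟨j, hj, (rfl | rfl)⟩)
            · exact Or.inl rfl
            · have hj' : j = (⟨2 * i, h2i⟩ : Fin n) :=
                Fin.ext (show j.val = 2 * i by have := j.isLt; omega)
              subst hj'
              exact Or.inr (Or.inl rfl)
            · have hj' : j = (⟨2 * i, h2i⟩ : Fin n) :=
                Fin.ext (show j.val = 2 * i by have := j.isLt; omega)
              subst hj'
              exact Or.inr (Or.inr rfl)
          · rintro (rfl | rfl | rfl)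
            · exact Or.inl rfl
            · exact Or.inr ⟨_, by simp only [Fin.val_mk]; omega, Or.inl rfl⟩
            · exact Or.inr ⟨_, by simp only [Fin.val_mk]; omega, Or.inr rfl⟩
        rw [e]
        exact isPathSet_triple _ (by simp [SStar_adj]) (by simp [SStar_adj])
          (by simp [SStar_adj]) (by simp)
    · intro v
      rcases v with u | j | j
      · refine ⟨_, Finset.mem_image_of_mem _ (Finset.mem_range.2 (show 0 < (n+1)/2 by omega)), ?_⟩
        exact Or.inl rfl
      · refine ⟨_, Finset.mem_image_of_mem _ (Finset.mem_range.2
          (show j.val / 2 < (n+1)/2 by have := j.isLt; omega)), ?_⟩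
        exact Or.inr ⟨j, rfl, Or.inl rfl⟩
      · refine ⟨_, Finset.mem_image_of_mem _ (Finset.mem_range.2
          (show j.val / 2 < (n+1)/2 by have := j.isLt; omega)), ?_⟩
        exact Or.inr ⟨j, rfl, Or.inr rfl⟩
  · intro Q hQ
    have hcnt : ((Finset.univ : Finset (Fin n)).image
        (fun i => (Sum.inr (Sum.inr i) : Unit ⊕ Fin n ⊕ Fin n))).card ≤ 2 * Q.card := by
      apply cover_count
      · intro v _
        exact hQ.2 v
      · intro S hS F hF hcard
        obtain ⟨a, b, c, ha, hb, hc, hab, hac, hbc⟩ := Finset.two_lt_card_iff.1 hcard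
        obtain ⟨haS, haT⟩ := hF a ha
        obtain ⟨hbS, hbT⟩ := hF b hb
        obtain ⟨hcS, hcT⟩ := hF c hc
        simp only [Finset.mem_image, Finset.mem_univ, true_and] at haT hbT hcT
        obtain ⟨ia, rfl⟩ := haT
        obtain ⟨ib, rfl⟩ := hbT
        obtain ⟨ic, rfl⟩ := hcT
        have hdeg : ∀ t ∈ S, (t = Sum.inr (Sum.inr ia) ∨ t = Sum.inr (Sum.inr ib) ∨
            t = Sum.inr (Sum.inr ic)) → ∀ u ∈ S, ∀ v ∈ S,
            (SStar n).Adj t u → (SStar n).Adj t v → u = v := by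
          rintro t _ (rfl | rfl | rfl) u _ v _ hu hv <;>
            rw [SStar_z_adj] at hu hv <;> rw [hu, hv]
        have hpred : IsInducedStarSet (SStar n) S ∨ IsInducedPathSet (SStar n) S := hQ.1 S hS
        rcases hpred with hstar | hpath
        · refine star_no_three hstar _ _ _ haS hbS hcS hab hac hbc hdeg ?_
          rintro t _ t' _ (rfl | rfl | rfl) (rfl | rfl | rfl) hne u _ hu hu' <;>
            rw [SStar_z_adj] at hu hu' <;> subst hu <;>
            first
            | exact hne rfl
            | (injection hu' with h1; injection h1 with h2;
               exact hne (congrArg (fun w : Fin n => (Sum.inr (Sum.inr w) : Unit ⊕ Fin n ⊕ Fin n)) h2))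
        · exact path_no_three hpath _ _ _ haS hbS hcS hab hac hbc hdeg
    rw [Finset.card_image_of_injective _ (fun a b h => by simpa using h),
      Finset.card_univ, Fintype.card_fin] at hcnt
    omega

lemma STilde_y_adj {n : ℕ} (i : Fin n) (u : Unit ⊕ Fin n ⊕ Fin n) :
    (STilde n).Adj (Sum.inr (Sum.inl i)) u ↔ (u = Sum.inl () ∨ u = Sum.inr (Sum.inr i)) := by
  rw [STilde_adj]
  constructor
  · rintro ⟨j, (⟨h1, h2⟩ | ⟨h1, h2 | h2⟩ | ⟨h1, h2⟩ | ⟨h1, h2⟩)⟩ <;> simp_all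
  · rintro (rfl | rfl)
    · exact ⟨i, Or.inr (Or.inl ⟨rfl, Or.inl rfl⟩)⟩
    · exact ⟨i, Or.inr (Or.inr (Or.inl ⟨rfl, rfl⟩))⟩

lemma STilde_z_adj {n : ℕ} (i : Fin n) (u : Unit ⊕ Fin n ⊕ Fin n) :
    (STilde n).Adj (Sum.inr (Sum.inr i)) u ↔ (u = Sum.inl () ∨ u = Sum.inr (Sum.inl i)) := by
  rw [STilde_adj]
  constructor
  · rintro ⟨j, (⟨h1, h2⟩ | ⟨h1, h2 | h2⟩ | ⟨h1, h2⟩ | ⟨h1, h2⟩)⟩ <;> simp_all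
  · rintro (rfl | rfl)
    · exact ⟨i, Or.inr (Or.inl ⟨rfl, Or.inr rfl⟩)⟩
    · exact ⟨i, Or.inr (Or.inr (Or.inr ⟨rfl, rfl⟩))⟩

lemma part3 (n : ℕ) (hn : 2 ≤ n) : inspp (STilde n) = n + 1 := by
  classical
  apply partitionNumber_eq_of (insert {Sum.inl ()}
    ((Finset.univ : Finset (Fin n)).image (fun i =>
      ({Sum.inr (Sum.inl i), Sum.inr (Sum.inr i)} : Set (Unit ⊕ Fin n ⊕ Fin n)))))
  · rw [Finset.card_insert_of_notMem, Finset.card_image_of_injective, Finset.card_univ,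
      Fintype.card_fin]
    · intro a b hab
      have hab' : ({Sum.inr (Sum.inl a), Sum.inr (Sum.inr a)} : Set (Unit ⊕ Fin n ⊕ Fin n)) =
          ({Sum.inr (Sum.inl b), Sum.inr (Sum.inr b)} : Set (Unit ⊕ Fin n ⊕ Fin n)) := hab
      have : (Sum.inr (Sum.inl a) : Unit ⊕ Fin n ⊕ Fin n) ∈
          ({Sum.inr (Sum.inl b), Sum.inr (Sum.inr b)} : Set (Unit ⊕ Fin n ⊕ Fin n)) := by
        rw [← hab']; exact Or.inl rfl
      rcases this with h | h <;> simp_all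
    · intro hmem
      simp only [Finset.mem_image, Finset.mem_univ, true_and] at hmem
      obtain ⟨i, hi⟩ := hmem
      have hi' : ({Sum.inr (Sum.inl i), Sum.inr (Sum.inr i)} : Set (Unit ⊕ Fin n ⊕ Fin n)) =
          ({Sum.inl ()} : Set (Unit ⊕ Fin n ⊕ Fin n)) := hi
      have : (Sum.inr (Sum.inl i) : Unit ⊕ Fin n ⊕ Fin n) ∈
          ({Sum.inl ()} : Set (Unit ⊕ Fin n ⊕ Fin n)) := by
        rw [← hi']; exact Or.inl rfl
      simp at this
  · refine ⟨⟨?_, ?_⟩, ?_⟩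
    · intro S hS
      rcases Finset.mem_insert.1 hS with rfl | hS
      · exact Or.inr (isPathSet_singleton _ _)
      · simp only [Finset.mem_image, Finset.mem_univ, true_and] at hS
        obtain ⟨i, rfl⟩ := hS
        exact Or.inr (isPathSet_pair _ ((STilde_y_adj i _).2 (Or.inr rfl)))
    · intro v
      rcases v with u | j | j
      · exact ⟨{Sum.inl ()}, Finset.mem_insert_self _ _, rfl⟩
      · exact ⟨_, Finset.mem_insert_of_mem (Finset.mem_image_of_mem _ (Finset.mem_univ j)),
          Or.inl rfl⟩
      · exact ⟨_, Finset.mem_insert_of_mem (Finset.mem_image_of_mem _ (Finset.mem_univ j)),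
          Or.inr rfl⟩
    · intro S hS T hT hne v hvS hvT
      rcases Finset.mem_insert.1 hS with rfl | hS <;> rcases Finset.mem_insert.1 hT with rfl | hT
      · exact hne rfl
      · simp only [Finset.mem_image, Finset.mem_univ, true_and] at hT
        obtain ⟨i, rfl⟩ := hT
        rcases hvS with rfl
        rcases hvT with h | h <;> simp_all
      · simp only [Finset.mem_image, Finset.mem_univ, true_and] at hS
        obtain ⟨i, rfl⟩ := hS
        rcases hvT with rfl
        rcases hvS with h | h <;> simp_all
      · simp only [Finset.mem_image, Finset.mem_univ, true_and] at hS hT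
        obtain ⟨i, rfl⟩ := hS
        obtain ⟨j, rfl⟩ := hT
        have hij : i ≠ j := by
          intro h
          exact hne (by rw [h])
        rcases hvS with rfl | rfl <;> rcases hvT with h | h <;> simp_all
  · intro Q hQ
    obtain ⟨⟨hpred, hcov⟩, hdisj⟩ := hQ
    obtain ⟨S₀, hS₀Q, hxS₀⟩ := hcov (Sum.inl ())
    -- each triangle has a vertex outside S₀
    have hw : ∀ i : Fin n, ∃ w : Unit ⊕ Fin n ⊕ Fin n,
        (w = Sum.inr (Sum.inl i) ∨ w = Sum.inr (Sum.inr i)) ∧ w ∉ S₀ := by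
      intro i
      by_contra hcon
      push_neg at hcon
      have hy := hcon (Sum.inr (Sum.inl i)) (Or.inl rfl)
      have hz := hcon (Sum.inr (Sum.inr i)) (Or.inr rfl)
      have hpS₀ : IsInducedStarSet (STilde n) S₀ ∨ IsInducedPathSet (STilde n) S₀ :=
        hpred S₀ hS₀Q
      exact sp_triangle_free hpS₀ (Sum.inl ()) (Sum.inr (Sum.inl i)) (Sum.inr (Sum.inr i))
        hxS₀ hy hz ((STilde_y_adj i _).2 (Or.inl rfl)).symm
        ((STilde_z_adj i _).2 (Or.inl rfl)).symm
        ((STilde_y_adj i _).2 (Or.inr rfl))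
    choose w hw1 hw2 using hw
    have hT : ∀ i : Fin n, ∃ T ∈ Q, w i ∈ T := fun i => hcov (w i)
    choose T hTQ hwT using hT
    -- T i ≠ S₀
    have hTne : ∀ i, T i ≠ S₀ := by
      intro i h
      exact hw2 i (h ▸ hwT i)
    -- x ∉ T i
    have hxT : ∀ i, Sum.inl () ∉ T i := by
      intro i h
      exact hdisj S₀ hS₀Q (T i) (hTQ i) (hTne i).symm _ hxS₀ h
    -- every vertex of T i has at most one neighbour inside T i
    have hdeg : ∀ i, ∀ t ∈ T i, ∀ u ∈ T i, ∀ v ∈ T i,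
        (STilde n).Adj t u → (STilde n).Adj t v → u = v := by
      intro i t ht u hu v hv hadj1 hadj2
      rcases t with tu | tj | tj
      · exact absurd ht (hxT i)
      · rw [STilde_y_adj] at hadj1 hadj2
        rcases hadj1 with rfl | rfl
        · exact absurd hu (hxT i)
        · rcases hadj2 with rfl | rfl
          · exact absurd hv (hxT i)
          · rfl
      · rw [STilde_z_adj] at hadj1 hadj2
        rcases hadj1 with rfl | rfl
        · exact absurd hu (hxT i)
        · rcases hadj2 with rfl | rfl
          · exact absurd hv (hxT i)
          · rfl
    -- T is injective
    have hTinj : Function.Injective T := by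
      intro i j hij
      by_contra hne
      have hwne : w i ≠ w j := by
        rcases hw1 i with h1 | h1 <;> rcases hw1 j with h2 | h2 <;> rw [h1, h2] <;>
          simp [hne]
      have hadj : (STilde n).Adj (w i) (w j) := by
        have hpredT : IsInducedStarSet (STilde n) (T i) ∨ IsInducedPathSet (STilde n) (T i) :=
          hpred (T i) (hTQ i)
        exact sp_adj_of_deg_one hpredT (hdeg i) (w i) (w j) (hwT i) (hij ▸ hwT j) hwne
      rcases hw1 i with h1 | h1 <;> rcases hw1 j with h2 | h2
      · rw [h1, h2, STilde_y_adj] at hadj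
        rcases hadj with h | h
        · exact absurd h (by simp)
        · exact absurd h (by simp)
      · rw [h1, h2, STilde_y_adj] at hadj
        rcases hadj with h | h
        · exact absurd h (by simp)
        · injection h with h'
          injection h' with h''
          exact hne h''.symm
      · rw [h1, h2, STilde_z_adj] at hadj
        rcases hadj with h | h
        · exact absurd h (by simp)
        · injection h with h'
          injection h' with h''
          exact hne h''.symm
      · rw [h1, h2, STilde_z_adj] at hadj
        rcases hadj with h | h
        · exact absurd h (by simp)
        · exact absurd h (by simp)
    -- conclude
    have hsub : insert S₀ ((Finset.univ : Finset (Fin n)).image T) ⊆ Q := by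
      intro S hS
      rcases Finset.mem_insert.1 hS with rfl | hS
      · exact hS₀Q
      · simp only [Finset.mem_image, Finset.mem_univ, true_and] at hS
        obtain ⟨i, rfl⟩ := hS
        exact hTQ i
    have hcard : (insert S₀ ((Finset.univ : Finset (Fin n)).image T)).card = n + 1 := by
      rw [Finset.card_insert_of_notMem, Finset.card_image_of_injective _ hTinj,
        Finset.card_univ, Fintype.card_fin]
      intro hmem
      simp only [Finset.mem_image, Finset.mem_univ, true_and] at hmem
      obtain ⟨i, hi⟩ := hmem
      exact hTne i hi
    calc n + 1 = (insert S₀ ((Finset.univ : Finset (Fin n)).image T)).card := hcard.symm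
      _ ≤ Q.card := Finset.card_le_card hsub

lemma starGraph_leaf_adj {n : ℕ} (j : Fin n) (u : Unit ⊕ Fin n) :
    (starGraphK1 n).Adj (Sum.inr j) u ↔ u = Sum.inl () := by
  cases u <;> simp [starGraphK1]

lemma starGraph_center_adj {n : ℕ} (j : Fin n) :
    (starGraphK1 n).Adj (Sum.inl ()) (Sum.inr j) := by
  simp [starGraphK1]

lemma part4 (n : ℕ) (hn : 2 ≤ n) : inpc (starGraphK1 n) = (n + 1) / 2 := by
  classical
  apply coverNumber_eq_of ((Finset.range ((n + 1) / 2)).image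
    (fun i => {v : Unit ⊕ Fin n | v = Sum.inl () ∨ ∃ j : Fin n, j.val / 2 = i ∧ v = Sum.inr j}))
  · rw [Finset.card_image_of_injOn, Finset.card_range]
    intro i hi j hj hij
    simp only [Finset.coe_range, Set.mem_Iio] at hi hj
    have h2i : 2 * i < n := by omega
    have hmem : (Sum.inr (⟨2 * i, h2i⟩ : Fin n) : Unit ⊕ Fin n) ∈
        {v : Unit ⊕ Fin n | v = Sum.inl () ∨ ∃ k : Fin n, k.val / 2 = i ∧ v = Sum.inr k} :=
      Or.inr ⟨⟨2 * i, h2i⟩, by simp only [Fin.val_mk]; omega, rfl⟩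
    have hij' : {v : Unit ⊕ Fin n | v = Sum.inl () ∨ ∃ k : Fin n, k.val / 2 = i ∧ v = Sum.inr k} =
        {v : Unit ⊕ Fin n | v = Sum.inl () ∨ ∃ k : Fin n, k.val / 2 = j ∧ v = Sum.inr k} := hij
    rw [hij'] at hmem
    rcases hmem with h | ⟨k, hk, hk'⟩
    · exact absurd h (by simp)
    · injection hk' with h'
      subst h'
      have hx : (2 * i) / 2 = j := hk
      omega
  · constructor
    · intro S hS
      simp only [Finset.mem_image, Finset.mem_range] at hS
      obtain ⟨i, hi, rfl⟩ := hS
      have h2i : 2 * i < n := by omega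
      by_cases h2i1 : 2 * i + 1 < n
      · have e : {v : Unit ⊕ Fin n | v = Sum.inl () ∨ ∃ j : Fin n, j.val / 2 = i ∧ v = Sum.inr j} =
            {Sum.inr (⟨2 * i, h2i⟩ : Fin n), Sum.inl (), Sum.inr (⟨2 * i + 1, h2i1⟩ : Fin n)} := by
          ext v
          simp only [Set.mem_setOf_eq, Set.mem_insert_iff, Set.mem_singleton_iff]
          constructor
          · rintro (rfl | ⟨j, hj, rfl⟩)
            · exact Or.inr (Or.inl rfl)
            · have hor : j.val = 2 * i ∨ j.val = 2 * i + 1 := by omega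
              rcases hor with h | h
              · have hj' : j = (⟨2 * i, h2i⟩ : Fin n) := Fin.ext h
                subst hj'
                exact Or.inl rfl
              · have hj' : j = (⟨2 * i + 1, h2i1⟩ : Fin n) := Fin.ext h
                subst hj'
                exact Or.inr (Or.inr rfl)
          · rintro (rfl | rfl | rfl)
            · exact Or.inr ⟨_, by simp only [Fin.val_mk]; omega, rfl⟩
            · exact Or.inl rfl
            · exact Or.inr ⟨_, by simp only [Fin.val_mk]; omega, rfl⟩
        rw [e]
        exact isPathSet_triple _ ((starGraph_leaf_adj _ _).2 rfl) (starGraph_center_adj _)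
          (by rw [starGraph_leaf_adj]; simp)
          (by simp only [ne_eq, Sum.inr.injEq, Fin.mk.injEq]; omega)
      · have e : {v : Unit ⊕ Fin n | v = Sum.inl () ∨ ∃ j : Fin n, j.val / 2 = i ∧ v = Sum.inr j} =
            {Sum.inl (), Sum.inr (⟨2 * i, h2i⟩ : Fin n)} := by
          ext v
          simp only [Set.mem_setOf_eq, Set.mem_insert_iff, Set.mem_singleton_iff]
          constructor
          · rintro (rfl | ⟨j, hj, rfl⟩)
            · exact Or.inl rfl
            · have h : j.val = 2 * i := by have := j.isLt; omega
              have hj' : j = (⟨2 * i, h2i⟩ : Fin n) := Fin.ext h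
              subst hj'
              exact Or.inr rfl
          · rintro (rfl | rfl)
            · exact Or.inl rfl
            · exact Or.inr ⟨_, by simp only [Fin.val_mk]; omega, rfl⟩
        rw [e]
        exact isPathSet_pair _ (starGraph_center_adj _)
    · intro v
      rcases v with u | j
      · exact ⟨_, Finset.mem_image_of_mem _ (Finset.mem_range.2 (show 0 < (n+1)/2 by omega)),
          Or.inl rfl⟩
      · exact ⟨_, Finset.mem_image_of_mem _ (Finset.mem_range.2
          (show j.val / 2 < (n+1)/2 by have := j.isLt; omega)), Or.inr ⟨j, rfl, rfl⟩⟩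
  · intro Q hQ
    have hcnt : ((Finset.univ : Finset (Fin n)).image
        (fun i => (Sum.inr i : Unit ⊕ Fin n))).card ≤ 2 * Q.card := by
      apply cover_count
      · intro v _
        exact hQ.2 v
      · intro S hS F hF hcard
        obtain ⟨a, b, c, ha, hb, hc, hab, hac, hbc⟩ := Finset.two_lt_card_iff.1 hcard
        obtain ⟨haS, haT⟩ := hF a ha
        obtain ⟨hbS, hbT⟩ := hF b hb
        obtain ⟨hcS, hcT⟩ := hF c hc
        simp only [Finset.mem_image, Finset.mem_univ, true_and] at haT hbT hcT
        obtain ⟨ia, rfl⟩ := haT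
        obtain ⟨ib, rfl⟩ := hbT
        obtain ⟨ic, rfl⟩ := hcT
        have hpath : IsInducedPathSet (starGraphK1 n) S := hQ.1 S hS
        refine path_no_three hpath _ _ _ haS hbS hcS hab hac hbc ?_
        rintro t _ (rfl | rfl | rfl) u _ v _ hu hv <;>
          rw [starGraph_leaf_adj] at hu hv <;> rw [hu, hv]
    rw [Finset.card_image_of_injective _ (fun a b h => by simpa using h),
      Finset.card_univ, Fintype.card_fin] at hcnt
    omega

lemma star_small {n : ℕ} {S : Set (Fin n)} (h : IsInducedStarSet (pathGraph n) S) :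
    ∃ a b c : Fin n, ∀ s ∈ S, s = a ∨ s = b ∨ s = c := by
  obtain ⟨m, hm, ⟨φ⟩⟩ := h
  have key : ∀ (s : Fin n) (hs : s ∈ S) (q : Unit ⊕ Fin m), φ ⟨s, hs⟩ = q →
      s = ↑(φ.symm q) := by
    intro s hs q hq
    have := congrArg φ.symm hq
    rw [RelIso.symm_apply_apply] at this
    exact congrArg Subtype.val this
  have hm2 : m ≤ 2 := by
    by_contra hm3
    push_neg at hm3
    set w := φ.symm (Sum.inl ())
    have hadj : ∀ k : Fin m, (pathGraph n).Adj ↑w ↑(φ.symm (Sum.inr k)) := by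
      intro k
      rw [adj_transport φ w (φ.symm (Sum.inr k)), RelIso.apply_symm_apply,
        RelIso.apply_symm_apply]
      exact Or.inl ⟨rfl, rfl⟩
    have hv : ∀ k : Fin m, (↑(φ.symm (Sum.inr k)) : Fin n).val = w.val.val + 1 ∨
        (↑(φ.symm (Sum.inr k)) : Fin n).val + 1 = w.val.val := by
      intro k
      have := hadj k
      rw [pathGraph_adj] at this
      omega
    have hne : ∀ k k' : Fin m, k ≠ k' →
        (↑(φ.symm (Sum.inr k)) : Fin n).val ≠ (↑(φ.symm (Sum.inr k')) : Fin n).val := by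
      intro k k' hkk' heq
      have : φ.symm (Sum.inr k) = φ.symm (Sum.inr k') :=
        Subtype.ext (Fin.ext heq)
      have := φ.symm.injective this
      simp only [Sum.inr.injEq] at this
      exact hkk' this
    have h0 := hv ⟨0, by omega⟩
    have h1 := hv ⟨1, by omega⟩
    have h2 := hv ⟨2, by omega⟩
    have n01 := hne ⟨0, by omega⟩ ⟨1, by omega⟩ (by simp only [ne_eq, Fin.mk.injEq]; omega)
    have n02 := hne ⟨0, by omega⟩ ⟨2, by omega⟩ (by simp only [ne_eq, Fin.mk.injEq]; omega)
    have n12 := hne ⟨1, by omega⟩ ⟨2, by omega⟩ (by simp only [ne_eq, Fin.mk.injEq]; omega)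
    omega
  refine ⟨↑(φ.symm (Sum.inl ())), ↑(φ.symm (Sum.inr ⟨0, by omega⟩)),
    if h2 : 2 ≤ m then ↑(φ.symm (Sum.inr ⟨1, h2⟩)) else ↑(φ.symm (Sum.inl ())), ?_⟩
  intro s hs
  rcases hq : φ ⟨s, hs⟩ with u | p
  · exact Or.inl (key s hs _ hq)
  · have hp : p.val = 0 ∨ p.val = 1 := by have := p.isLt; omega
    rcases hp with hp | hp
    · refine Or.inr (Or.inl (key s hs _ ?_))
      rw [hq]
      congr 1
      exact Fin.ext hp
    · have h2 : 2 ≤ m := by have := p.isLt; omega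
      refine Or.inr (Or.inr ?_)
      rw [dif_pos h2]
      refine key s hs _ ?_
      rw [hq]
      congr 1
      exact Fin.ext hp

lemma part5 (n : ℕ) (hn : 2 ≤ n) : insc (pathGraph n) = (n + 2) / 3 := by
  classical
  apply coverNumber_eq_of ((Finset.range ((n + 2) / 3)).image
    (fun i => {v : Fin n | v.val / 3 = i}))
  · rw [Finset.card_image_of_injOn, Finset.card_range]
    intro i hi j hj hij
    simp only [Finset.coe_range, Set.mem_Iio] at hi hj
    have h3i : 3 * i < n := by omega
    have hmem : (⟨3 * i, h3i⟩ : Fin n) ∈ {v : Fin n | v.val / 3 = i} := by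
      simp only [Set.mem_setOf_eq, Fin.val_mk]
      omega
    have hij' : {v : Fin n | v.val / 3 = i} = {v : Fin n | v.val / 3 = j} := hij
    rw [hij'] at hmem
    simp only [Set.mem_setOf_eq, Fin.val_mk] at hmem
    omega
  · constructor
    · intro S hS
      simp only [Finset.mem_image, Finset.mem_range] at hS
      obtain ⟨i, hi, rfl⟩ := hS
      have h3i : 3 * i < n := by omega
      by_cases h2 : 3 * i + 2 < n
      · left
        have h1 : 3 * i + 1 < n := by omega
        have e : {v : Fin n | v.val / 3 = i} =
            {(⟨3 * i, h3i⟩ : Fin n), ⟨3 * i + 1, h1⟩, ⟨3 * i + 2, h2⟩} := by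
          ext v
          simp [Fin.ext_iff]
          omega
        rw [e]
        refine isStarSet_triple _ ?_ ?_ ?_ ?_
        · exact pathGraph_adj.2 (Or.inr rfl)
        · exact pathGraph_adj.2 (Or.inl rfl)
        · rw [pathGraph_adj]
          simp only [Fin.val_mk]
          omega
        · simp only [ne_eq, Fin.mk.injEq]
          omega
      · by_cases h1 : 3 * i + 1 < n
        · left
          have e : {v : Fin n | v.val / 3 = i} = {(⟨3 * i, h3i⟩ : Fin n), ⟨3 * i + 1, h1⟩} := by
            ext v
            simp [Fin.ext_iff]
            omega
          rw [e]
          exact isStarSet_pair _ (pathGraph_adj.2 (Or.inl rfl))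
        · right
          refine ⟨⟨3 * i, h3i⟩, ?_⟩
          ext v
          simp [Fin.ext_iff]
          omega
    · intro v
      refine ⟨{w : Fin n | w.val / 3 = v.val / 3}, ?_, rfl⟩
      apply Finset.mem_image_of_mem
      rw [Finset.mem_range]
      have := v.isLt
      omega
  · intro Q hQ
    have hcnt : (Finset.univ : Finset (Fin n)).card ≤ 3 * Q.card := by
      apply cover_count
      · intro v _
        exact hQ.2 v
      · intro S hS F hF hcard
        have hpred : IsInducedStarSet (pathGraph n) S ∨ (∃ v, S = {v}) := hQ.1 S hS
        have hsmall : ∃ a b c : Fin n, ∀ s ∈ S, s = a ∨ s = b ∨ s = c := by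
          rcases hpred with h | ⟨v, rfl⟩
          · exact star_small h
          · exact ⟨v, v, v, fun s hs => Or.inl hs⟩
        obtain ⟨a, b, c, habc⟩ := hsmall
        have hsub : F ⊆ ({a, b, c} : Finset (Fin n)) := by
          intro v hv
          rcases habc v (hF v hv).1 with rfl | rfl | rfl <;>
            simp [Finset.mem_insert]
        have hcard3 : F.card ≤ 3 := by
          calc F.card ≤ ({a, b, c} : Finset (Fin n)).card := Finset.card_le_card hsub
            _ ≤ ({b, c} : Finset (Fin n)).card + 1 := Finset.card_insert_le _ _
            _ ≤ (({c} : Finset (Fin n)).card + 1) + 1 :=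
                Nat.add_le_add_right (Finset.card_insert_le _ _) 1
            _ = 3 := by simp
        omega
    rw [Finset.card_univ, Fintype.card_fin] at hcnt
    omega


theorem statement_17 (n : ℕ) (hn : 2 ≤ n) :
    inspc (completeGraph (Fin n)) = (n + 1) / 2 ∧
    inspc (SStar n) = (n + 1) / 2 ∧
    inspp (STilde n) = n + 1 ∧
    inpc (starGraphK1 n) = (n + 1) / 2 ∧
    insc (pathGraph n) = (n + 2) / 3 :=
  ⟨part1 n hn, part2 n hn, part3 n hn, part4 n hn, part5 n hn⟩
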